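/- In the setting of the previous statement with M = Ω_k⁻¹ where Ω_k = E[z̄_k(X) z̄_k(X)ᵀ] is invertible and r(O) = z̄_k(X)(A − p̂(X)) with E[A | X] = p(X): the mean of the quadratic-form U-statistic equals E[(p(X) − p̂(X)) Π[p − p̂ | z̄_k](X)] = ‖Π[p − p̂ | z̄_k]‖²_{L²(law of X)}, the squared L² norm of the projection of the estimation error p − p̂ onto span(z̄_k). -/

import Mathlib

open MeasureTheory

/-- The mean `μᵀ Ωₖ⁻¹ μ` of the quadratic-form U-statistic `IF₂₂` with
`r(O) = z̄ₖ(X)(A − p̂(X))`, `μ = E[z̄ₖ(X)(A − p̂(X))]`, `Ωₖ = E[z̄ₖ(X) z̄ₖ(X)ᵀ]` and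
`E[A | X] = p(X)`, equals `E[(p(X) − p̂(X)) Π[p − p̂ | z̄ₖ](X)]`, the squared `L²` norm
`‖Π[p − p̂ | z̄ₖ]‖²` of the projection of the estimation error onto `span(z̄ₖ)`. -/
theorem stmt_13 {Ω 𝒳 : Type*} [MeasurableSpace 𝒳] {mΩ : MeasurableSpace Ω}
    (μ : Measure Ω) [IsProbabilityMeasure μ]
    (X : Ω → 𝒳) (hX : Measurable X) (A : Ω → ℝ) (hA : Integrable A μ)
    {k : ℕ} (z : 𝒳 → Fin k → ℝ) (hzm : ∀ i, Measurable fun x => z x i)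
    (hzb : ∃ C : ℝ, ∀ x i, |z x i| ≤ C)
    (p phat : 𝒳 → ℝ)
    (hpX : MemLp (fun ω => p (X ω)) 2 μ) (hphatX : MemLp (fun ω => phat (X ω)) 2 μ)
    -- E[A | X] = p(X):
    (hp : μ[A|MeasurableSpace.comap X inferInstance] =ᵐ[μ] fun ω => p (X ω))
    (Ωmat : Matrix (Fin k) (Fin k) ℝ)
    (hΩ : ∀ i j, Ωmat i j = ∫ ω, z (X ω) i * z (X ω) j ∂μ)
    (hΩinv : IsUnit Ωmat.det)
    (μvec : Fin k → ℝ)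
    (hμvec : ∀ i, μvec i = ∫ ω, z (X ω) i * (A ω - phat (X ω)) ∂μ)
    -- the L²(law of X) projection of p − p̂ onto span(z̄ₖ):
    (Pf : 𝒳 → ℝ)
    (hPf : ∀ x, Pf x = ∑ i, z x i *
      Ωmat⁻¹.mulVec (fun j => ∫ ω, z (X ω) j * (p (X ω) - phat (X ω)) ∂μ) i) :
    (∑ i, ∑ j, μvec i * Ωmat⁻¹ i j * μvec j
        = ∫ ω, (p (X ω) - phat (X ω)) * Pf (X ω) ∂μ) ∧
    (∑ i, ∑ j, μvec i * Ωmat⁻¹ i j * μvec j = ∫ ω, (Pf (X ω))^2 ∂μ) := by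
  obtain ⟨C, hC⟩ := hzb
  set m := MeasurableSpace.comap X inferInstance with hm_def
  have hm : m ≤ mΩ := fun s ⟨t, ht, hts⟩ => hts ▸ hX ht
  -- measurability of z i ∘ X w.r.t. m
  have hzXm : ∀ i, Measurable[m] (fun ω => z (X ω) i) := fun i =>
    (hzm i).comp (Measurable.of_comap_le le_rfl)
  have hzX : ∀ i, Measurable[mΩ] (fun ω => z (X ω) i) := fun i => ((hzm i).comp hX)
  have hzbnd : ∀ i, ∀ ω, ‖z (X ω) i‖ ≤ C := fun i ω => hC (X ω) i
  have hzXint : ∀ i, Integrable (fun ω => z (X ω) i) μ := fun i =>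
    (integrable_const |C|).mono' (hzX i).aestronglyMeasurable
      (Filter.Eventually.of_forall fun ω => (hzbnd i ω).trans (le_abs_self C))
  have hpint : Integrable (fun ω => p (X ω)) μ := hpX.integrable (by norm_num)
  have hphatint : Integrable (fun ω => phat (X ω)) μ := hphatX.integrable (by norm_num)
  set ν : Fin k → ℝ := fun j => ∫ ω, z (X ω) j * (p (X ω) - phat (X ω)) ∂μ with hν
  set c : Fin k → ℝ := Ωmat⁻¹.mulVec ν with hc
  -- Step: μvec = ν
  have hμν : ∀ i, μvec i = ν i := by
    intro i
    have hiA : Integrable (fun ω => z (X ω) i * A ω) μ :=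
      hA.bdd_mul (hzX i).aestronglyMeasurable (Filter.Eventually.of_forall (hzbnd i))
    have hip : Integrable (fun ω => z (X ω) i * p (X ω)) μ :=
      hpint.bdd_mul (hzX i).aestronglyMeasurable (Filter.Eventually.of_forall (hzbnd i))
    have hiph : Integrable (fun ω => z (X ω) i * phat (X ω)) μ :=
      hphatint.bdd_mul (hzX i).aestronglyMeasurable (Filter.Eventually.of_forall (hzbnd i))
    have key : ∫ ω, z (X ω) i * A ω ∂μ = ∫ ω, z (X ω) i * p (X ω) ∂μ := by
      have h1 : μ[(fun ω => z (X ω) i) * A|m] =ᵐ[μ] (fun ω => z (X ω) i) * μ[A|m] :=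
        condExp_mul_of_stronglyMeasurable_left (hzXm i).stronglyMeasurable hiA hA
      calc ∫ ω, z (X ω) i * A ω ∂μ = ∫ ω, ((fun ω => z (X ω) i) * A) ω ∂μ := rfl
        _ = ∫ ω, (μ[(fun ω => z (X ω) i) * A|m]) ω ∂μ := (integral_condExp hm).symm
        _ = ∫ ω, z (X ω) i * (μ[A|m]) ω ∂μ := integral_congr_ae h1
        _ = ∫ ω, z (X ω) i * p (X ω) ∂μ := by
            refine integral_congr_ae ?_
            filter_upwards [hp] with ω hω
            rw [hω]
    rw [hμvec i, hν]
    simp only [mul_sub]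
    rw [integral_sub hiA hiph, integral_sub hip hiph, key]
  -- common value: ∑ i, ν i * c i
  have hgoalL : ∑ i, ∑ j, μvec i * Ωmat⁻¹ i j * μvec j = ∑ i, ν i * c i := by
    refine Finset.sum_congr rfl fun i _ => ?_
    simp only [hc, Matrix.mulVec, dotProduct, Finset.mul_sum, hμν, mul_assoc]
  have hppint : Integrable (fun ω => p (X ω) - phat (X ω)) μ := hpint.sub hphatint
  have hΩc : Ωmat.mulVec c = ν := by
    rw [hc, Matrix.mulVec_mulVec, Matrix.mul_nonsing_inv _ hΩinv, Matrix.one_mulVec]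
  have goal1 : ∫ ω, (p (X ω) - phat (X ω)) * Pf (X ω) ∂μ = ∑ i, ν i * c i := by
    have hcongr : ∀ ω, (p (X ω) - phat (X ω)) * Pf (X ω)
        = ∑ i, (z (X ω) i * (p (X ω) - phat (X ω))) * c i := by
      intro ω
      rw [hPf, Finset.mul_sum]
      exact Finset.sum_congr rfl fun i _ => by ring
    simp_rw [hcongr]
    rw [integral_finset_sum _ fun i _ =>
      (hppint.bdd_mul (hzX i).aestronglyMeasurable (Filter.Eventually.of_forall (hzbnd i))).mul_const _]
    refine Finset.sum_congr rfl fun i _ => ?_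
    rw [integral_mul_const]
  have goal2 : ∫ ω, (Pf (X ω))^2 ∂μ = ∑ i, ν i * c i := by
    have hcongr : ∀ ω, (Pf (X ω))^2
        = ∑ i, ∑ j, (z (X ω) i * z (X ω) j) * (c i * c j) := by
      intro ω
      rw [hPf, sq, Finset.sum_mul_sum]
      exact Finset.sum_congr rfl fun i _ => Finset.sum_congr rfl fun j _ => by ring
    have hijint : ∀ i j, Integrable (fun ω => (z (X ω) i * z (X ω) j) * (c i * c j)) μ :=
      fun i j => (((hzXint j).bdd_mul (hzX i).aestronglyMeasurable (Filter.Eventually.of_forall (hzbnd i))).mul_const _)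
    simp_rw [hcongr]
    rw [integral_finset_sum _ fun i _ => integrable_finset_sum _ fun j _ => hijint i j]
    have : ∀ i, ∫ ω, ∑ j, (z (X ω) i * z (X ω) j) * (c i * c j) ∂μ
        = ∑ j, Ωmat i j * (c i * c j) := by
      intro i
      rw [integral_finset_sum _ fun j _ => hijint i j]
      exact Finset.sum_congr rfl fun j _ => by rw [integral_mul_const, hΩ]
    simp_rw [this]
    have hν' : ∀ i, ν i = ∑ j, Ωmat i j * c j := fun i => by
      rw [← hΩc]; rfl
    refine Finset.sum_congr rfl fun i _ => ?_
    rw [hν' i, Finset.sum_mul]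
    exact Finset.sum_congr rfl fun j _ => by ring
  exact ⟨hgoalL.trans goal1.symm, hgoalL.trans goal2.symm⟩
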